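/- Abstract non-deficit inequality for MUDAR (Lemma 4, ND): let m ≥ 1 and K be natural numbers, let v : Fin K → ℝ be injective with the property that for every k < K at most m − 1 indices j < k satisfy v(j) > v(k), and let p̂ : Fin K → ℝ satisfy p̂(k) ≥ 0 for every k < m and p̂(k) ≥ ψ(k) for every k with m ≤ k < K. Let W_A be the complement of W_R in Fin K. Then Σ_{k ∈ W_A} p̂(k) + Σ_{k ∈ W_R} (p̂(k) − v(k)) ≥ 0. -/

import Mathlib

open scoped Classical

/-- For a finite set `s` of reals with at least `r` elements, the `r`-th largest element
of `s` (1-based): the entry at position `r − 1` of `s` sorted in decreasing order. -/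
noncomputable def kthLargest (s : Finset ℝ) (r : ℕ) : ℝ :=
  (s.sort (· ≤ ·)).reverse.getD (r - 1) 0

/-- `ψ k`: the `(m+1)`-st largest element of the prefix `{v 0, v 1, …, v k}`. -/
noncomputable def psi {K : ℕ} (m : ℕ) (v : Fin K → ℝ) (k : ℕ) : ℝ :=
  kthLargest ((Finset.univ.filter (fun j : Fin K => (j : ℕ) ≤ k)).image v) (m + 1)

/-- `W_R`: the indices `k` such that `v k` is not among the `m` largest of all `K` values,
i.e. at least `m` indices `j` satisfy `v j > v k`. -/
noncomputable def WR {K : ℕ} (m : ℕ) (v : Fin K → ℝ) : Finset (Fin K) :=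
  Finset.univ.filter (fun k => m ≤ (Finset.univ.filter (fun j : Fin K => v k < v j)).card)

lemma kthLargest_spec (s : Finset ℝ) (r : ℕ) (hr : 1 ≤ r) (hc : r ≤ s.card) :
    kthLargest s r ∈ s ∧ (s.filter (fun y => kthLargest s r < y)).card = r - 1 := by
  classical
  set l := s.sort (· ≤ ·) with hl
  have hlen : l.length = s.card := Finset.length_sort _
  have hsort : l.Pairwise (· < ·) := (Finset.sortedLT_sort s).pairwise
  have hpw := List.pairwise_iff_getElem.mp hsort
  have hidx : r - 1 < l.reverse.length := by
    rw [List.length_reverse, hlen]; omega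
  have hidx2 : l.length - r < l.length := by omega
  have hk : kthLargest s r = l[l.length - r] := by
    rw [kthLargest, List.getD_eq_getElem _ _ hidx, List.getElem_reverse]
    congr 1; omega
  refine ⟨?_, ?_⟩
  · rw [hk, ← Finset.mem_sort (α := ℝ) (· ≤ ·)]
    exact List.getElem_mem _
  · have hcard : (s.filter (fun y => kthLargest s r < y)).card
        = l.countP (fun y => decide (kthLargest s r < y)) := by
      rw [← Multiset.coe_countP, hl, Finset.sort_eq]
      simp [Finset.filter, Finset.card, Multiset.countP_eq_card_filter]
    rw [hcard, ← List.take_append_drop (l.length - r + 1) l, List.countP_append]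
    have h1 : (l.take (l.length - r + 1)).countP (fun y => decide (kthLargest s r < y)) = 0 := by
      rw [List.countP_eq_zero]
      intro a ha
      rw [List.mem_iff_getElem] at ha
      obtain ⟨i, hi, rfl⟩ := ha
      have hi' : i < l.length - r + 1 := by
        have := hi; rw [List.length_take] at this; omega
      rw [List.getElem_take]
      simp only [hk, decide_eq_true_eq, not_lt]
      rcases Nat.lt_or_ge i (l.length - r) with h | h
      · exact le_of_lt (hpw i (l.length - r) (by omega) hidx2 h)
      · have : i = l.length - r := by omega
        subst this; exact le_refl _
    have h2 : (l.drop (l.length - r + 1)).countP (fun y => decide (kthLargest s r < y))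
        = (l.drop (l.length - r + 1)).length := by
      rw [List.countP_eq_length]
      intro a ha
      rw [List.mem_iff_getElem] at ha
      obtain ⟨i, hi, rfl⟩ := ha
      have hi' : i + (l.length - r + 1) < l.length := by
        have := hi; rw [List.length_drop] at this; omega
      rw [List.getElem_drop]
      simp only [hk, decide_eq_true_eq]
      exact hpw _ _ hidx2 (by omega) (by omega)
    rw [h1, h2, List.length_drop]
    omega

lemma kthLargest_unique (s : Finset ℝ) (r : ℕ) (hr : 1 ≤ r) (hc : r ≤ s.card)
    (x : ℝ) (hx : x ∈ s) (hcard : (s.filter (fun y => x < y)).card = r - 1) :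
    kthLargest s r = x := by
  classical
  obtain ⟨hz, hzc⟩ := kthLargest_spec s r hr hc
  set z := kthLargest s r
  by_contra hne
  rcases lt_trichotomy z x with h | h | h
  · -- insert x (filter (x < ·)) ⊆ filter (z < ·)
    have hsub : insert x (s.filter (fun y => x < y)) ⊆ s.filter (fun y => z < y) := by
      intro a ha
      rcases Finset.mem_insert.mp ha with rfl | ha
      · exact Finset.mem_filter.mpr ⟨hx, h⟩
      · obtain ⟨has, hax⟩ := Finset.mem_filter.mp ha
        exact Finset.mem_filter.mpr ⟨has, h.trans hax⟩
    have := Finset.card_le_card hsub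
    rw [Finset.card_insert_of_notMem (by simp), hcard, hzc] at this
    omega
  · exact hne h
  · have hsub : insert z (s.filter (fun y => z < y)) ⊆ s.filter (fun y => x < y) := by
      intro a ha
      rcases Finset.mem_insert.mp ha with rfl | ha
      · exact Finset.mem_filter.mpr ⟨hz, h⟩
      · obtain ⟨has, hax⟩ := Finset.mem_filter.mp ha
        exact Finset.mem_filter.mpr ⟨has, h.trans hax⟩
    have := Finset.card_le_card hsub
    rw [Finset.card_insert_of_notMem (by simp), hcard, hzc] at this
    omega

/-- number of indices `i ≤ t` whose value beats `v j`. -/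
noncomputable def cnt {K : ℕ} (v : Fin K → ℝ) (j : Fin K) (t : ℕ) : ℕ :=
  (Finset.univ.filter (fun i : Fin K => (i : ℕ) ≤ t ∧ v j < v i)).card

lemma cnt_mono {K : ℕ} (v : Fin K → ℝ) (j : Fin K) {t t' : ℕ} (h : t ≤ t') :
    cnt v j t ≤ cnt v j t' := by
  apply Finset.card_le_card
  intro i hi
  simp only [Finset.mem_filter, Finset.mem_univ, true_and] at *
  exact ⟨hi.1.trans h, hi.2⟩

lemma cnt_succ_le {K : ℕ} (v : Fin K → ℝ) (j : Fin K) (t : ℕ) :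
    cnt v j (t + 1) ≤ cnt v j t + 1 := by
  by_cases hK : t + 1 < K
  · have hsub : (Finset.univ.filter (fun i : Fin K => (i : ℕ) ≤ t + 1 ∧ v j < v i))
        ⊆ insert ⟨t + 1, hK⟩ (Finset.univ.filter (fun i : Fin K => (i : ℕ) ≤ t ∧ v j < v i)) := by
      intro i hi
      simp only [Finset.mem_filter, Finset.mem_univ, true_and] at hi
      rcases Nat.lt_or_ge (i : ℕ) (t + 1) with h | h
      · apply Finset.mem_insert_of_mem
        simp only [Finset.mem_filter, Finset.mem_univ, true_and]
        exact ⟨by omega, hi.2⟩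
      · have hit : (i : ℕ) = t + 1 := by omega
        have : i = (⟨t + 1, hK⟩ : Fin K) := Fin.ext (by rw [hit])
        exact this ▸ Finset.mem_insert_self _ _
    calc cnt v j (t + 1) ≤ _ := Finset.card_le_card hsub
    _ ≤ cnt v j t + 1 := Finset.card_insert_le _ _
  · have : (Finset.univ.filter (fun i : Fin K => (i : ℕ) ≤ t + 1 ∧ v j < v i))
        ⊆ (Finset.univ.filter (fun i : Fin K => (i : ℕ) ≤ t ∧ v j < v i)) := by
      intro i hi
      simp only [Finset.mem_filter, Finset.mem_univ, true_and] at *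
      exact ⟨by have := i.isLt; omega, hi.2⟩
    have h2 := Finset.card_le_card this
    simp only [cnt]
    omega

lemma card_prefix {K : ℕ} (t : ℕ) (ht : t < K) :
    (Finset.univ.filter (fun i : Fin K => (i : ℕ) ≤ t)).card = t + 1 := by
  have : (Finset.univ.filter (fun i : Fin K => (i : ℕ) ≤ t)).card = (Finset.range (t+1)).card := by
    apply Finset.card_bij (fun (i : Fin K) _ => (i : ℕ))
    · intro a ha
      simp only [Finset.mem_filter] at ha
      simp only [Finset.mem_range]; omega
    · intro a _ b _ h; exact Fin.ext h
    · intro b hb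
      simp only [Finset.mem_range] at hb
      exact ⟨⟨b, by omega⟩, by simp only [Finset.mem_filter, Finset.mem_univ, true_and]; omega, rfl⟩
  rw [this, Finset.card_range]

lemma cnt_le_t {K : ℕ} {v : Fin K → ℝ} {j : Fin K} {t : ℕ} (hj : (j : ℕ) ≤ t) (ht : t < K) :
    cnt v j t ≤ t := by
  have hsub : (Finset.univ.filter (fun i : Fin K => (i : ℕ) ≤ t ∧ v j < v i))
      ⊆ (Finset.univ.filter (fun i : Fin K => (i : ℕ) ≤ t)).erase j := by
    intro i hi
    simp only [Finset.mem_filter, Finset.mem_univ, true_and] at hi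
    refine Finset.mem_erase.mpr ⟨fun h => ?_, by simp [Finset.mem_filter, hi.1]⟩
    subst h; exact lt_irrefl _ hi.2
  have := Finset.card_le_card hsub
  rw [Finset.card_erase_of_mem (by simp [Finset.mem_filter, hj]), card_prefix t ht] at this
  simpa [cnt] using this

lemma psi_exists {K m : ℕ} {v : Fin K → ℝ} (hv : Function.Injective v) {t : ℕ}
    (hmt : m ≤ t) (ht : t < K) :
    ∃ j : Fin K, (j : ℕ) ≤ t ∧ v j = psi m v t ∧ cnt v j t = m := by
  classical
  set P := Finset.univ.filter (fun i : Fin K => (i : ℕ) ≤ t) with hP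
  have hcardP : P.card = t + 1 := card_prefix t ht
  have hcard : (P.image v).card = t + 1 := by
    rw [Finset.card_image_of_injective _ hv, hcardP]
  obtain ⟨hmem, hcnt⟩ := kthLargest_spec (P.image v) (m + 1) (by omega) (by omega)
  obtain ⟨j, hjP, hjv⟩ := Finset.mem_image.mp hmem
  have hpsi : psi m v t = kthLargest (P.image v) (m + 1) := by rw [psi, hP]
  refine ⟨j, by simpa [hP, Finset.mem_filter] using hjP, by rw [hpsi]; exact hjv, ?_⟩
  have himg : (P.image v).filter (fun y => kthLargest (P.image v) (m+1) < y)
      = (P.filter (fun i => kthLargest (P.image v) (m+1) < v i)).image v := by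
    rw [Finset.filter_image]
  have : (P.filter (fun i => kthLargest (P.image v) (m+1) < v i)).card = m := by
    have := hcnt
    rw [himg, Finset.card_image_of_injective _ hv] at this
    simpa using this
  rw [cnt]
  rw [← this, hP, Finset.filter_filter]
  congr 1
  ext i
  rw [hjv]

lemma psi_unique {K m : ℕ} {v : Fin K → ℝ} (hv : Function.Injective v) {t : ℕ} {j : Fin K}
    (hj : (j : ℕ) ≤ t) (ht : t < K) (hc : cnt v j t = m) :
    psi m v t = v j := by
  classical
  set P := Finset.univ.filter (fun i : Fin K => (i : ℕ) ≤ t) with hP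
  have hcardP : P.card = t + 1 := card_prefix t ht
  have hmt : m ≤ t := by have := cnt_le_t (v := v) hj ht; omega
  have hcard : (P.image v).card = t + 1 := by
    rw [Finset.card_image_of_injective _ hv, hcardP]
  have hgoal : psi m v t = kthLargest (P.image v) (m + 1) := by rw [psi, hP]
  rw [hgoal]
  apply kthLargest_unique _ (m + 1) (by omega) (by rw [hcard]; omega)
  · exact Finset.mem_image_of_mem v (by simp [hP, Finset.mem_filter, hj])
  · have himg : (P.image v).filter (fun y => v j < y)
        = (P.filter (fun i => v j < v i)).image v := by
      rw [Finset.filter_image]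
    rw [himg, Finset.card_image_of_injective _ hv]
    have : P.filter (fun i => v j < v i)
        = Finset.univ.filter (fun i : Fin K => (i : ℕ) ≤ t ∧ v j < v i) := by
      rw [hP, Finset.filter_filter]
    rw [this]
    simpa [cnt] using hc


/-- Abstract non-deficit inequality for MUDAR (Lemma 4, ND): with `v` injective, each new
value among the `m` largest of its prefix, and tentative payments `p̂` that are
non-negative for the first `m` winners and at least `ψ k` afterwards, the revenue
`Σ_{k ∈ W_A} p̂ k + Σ_{k ∈ W_R} (p̂ k − v k)` is non-negative, where `W_A = W_Rᶜ`. -/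
theorem mudar_nondeficit (m K : ℕ) (hm : 1 ≤ m) (v : Fin K → ℝ)
    (hv : Function.Injective v)
    (hpre : ∀ k : Fin K,
      (Finset.univ.filter (fun j : Fin K => (j : ℕ) < (k : ℕ) ∧ v k < v j)).card ≤ m - 1)
    (phat : Fin K → ℝ)
    (h1 : ∀ k : Fin K, (k : ℕ) < m → 0 ≤ phat k)
    (h2 : ∀ k : Fin K, m ≤ (k : ℕ) → psi m v (k : ℕ) ≤ phat k) :
    0 ≤ ∑ k ∈ (WR m v)ᶜ, phat k + ∑ k ∈ WR m v, (phat k - v k) := by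
  classical
  rcases Nat.eq_zero_or_pos K with hK | hK
  · subst hK
    rw [Finset.eq_empty_of_isEmpty ((WR m v)ᶜ), Finset.eq_empty_of_isEmpty (WR m v)]
    simp
  have hWR : ∀ j : Fin K, j ∈ WR m v ↔ m ≤ cnt v j (K - 1) := by
    intro j
    rw [WR, Finset.mem_filter]
    simp only [Finset.mem_univ, true_and, cnt]
    constructor
    · intro h
      refine le_trans h (Finset.card_le_card ?_)
      intro i hi
      simp only [Finset.mem_filter, Finset.mem_univ, true_and] at *
      exact ⟨by have := i.isLt; omega, hi⟩
    · intro h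
      refine le_trans h (Finset.card_le_card ?_)
      intro i hi
      simp only [Finset.mem_filter, Finset.mem_univ, true_and] at *
      exact hi.2
  have hcntself : ∀ j : Fin K, cnt v j (j : ℕ) < m := by
    intro j
    have hsub : (Finset.univ.filter (fun i : Fin K => (i : ℕ) ≤ (j : ℕ) ∧ v j < v i))
        ⊆ Finset.univ.filter (fun i : Fin K => (i : ℕ) < (j : ℕ) ∧ v j < v i) := by
      intro i hi
      simp only [Finset.mem_filter, Finset.mem_univ, true_and] at *
      refine ⟨lt_of_le_of_ne hi.1 fun h => ?_, hi.2⟩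
      have : i = j := Fin.ext h
      subst this; exact absurd hi.2 (lt_irrefl _)
    have h1' := Finset.card_le_card hsub
    have h2' := hpre j
    simp only [cnt]
    omega
  have hexists : ∀ k : Fin K, m ≤ (k : ℕ) →
      ∃ j : Fin K, (j : ℕ) ≤ (k : ℕ) ∧ v j = psi m v (k : ℕ) ∧ cnt v j (k : ℕ) = m :=
    fun k hk => psi_exists hv hk k.isLt
  set σ : Fin K → Fin K := fun k =>
    if h : ∃ j : Fin K, (j : ℕ) ≤ (k : ℕ) ∧ v j = psi m v (k : ℕ) ∧ cnt v j (k : ℕ) = m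
    then h.choose else k with hσdef
  have hσ : ∀ k : Fin K, m ≤ (k : ℕ) →
      (σ k : ℕ) ≤ (k : ℕ) ∧ v (σ k) = psi m v (k : ℕ) ∧ cnt v (σ k) (k : ℕ) = m := by
    intro k hk
    have h := hexists k hk
    simp only [hσdef, dif_pos h]
    exact h.choose_spec
  set τ : Fin K → Fin K := fun j =>
    if h : ∃ t, m ≤ cnt v j t then ⟨min (Nat.find h) (K - 1), by omega⟩ else j with hτdef
  have hτspec : ∀ j : Fin K, j ∈ WR m v →
      m ≤ cnt v j (τ j : ℕ) ∧ ∀ t' < (τ j : ℕ), cnt v j t' < m := by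
    intro j hj
    have h : ∃ t, m ≤ cnt v j t := ⟨K - 1, (hWR j).mp hj⟩
    have hle : Nat.find h ≤ K - 1 := Nat.find_le ((hWR j).mp hj)
    have hτval : (τ j : ℕ) = Nat.find h := by
      simp only [hτdef, dif_pos h]
      omega
    rw [hτval]
    exact ⟨Nat.find_spec h, fun t' ht' => lt_of_not_ge (Nat.find_min h ht')⟩
  -- facts for j ∈ WR
  have hτfacts : ∀ j : Fin K, j ∈ WR m v →
      (j : ℕ) < (τ j : ℕ) ∧ cnt v j (τ j : ℕ) = m ∧ m ≤ (τ j : ℕ) ∧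
        psi m v (τ j : ℕ) = v j := by
    intro j hj
    obtain ⟨hge, hmin⟩ := hτspec j hj
    have hjτ : (j : ℕ) < (τ j : ℕ) := by
      by_contra hcon
      push_neg at hcon
      have := cnt_mono v j hcon
      have := hcntself j
      omega
    have hcntτ : cnt v j (τ j : ℕ) = m := by
      have h0 : 1 ≤ (τ j : ℕ) := by omega
      have hprev : cnt v j ((τ j : ℕ) - 1) < m := hmin _ (by omega)
      have hstep := cnt_succ_le v j ((τ j : ℕ) - 1)
      have : (τ j : ℕ) - 1 + 1 = (τ j : ℕ) := by omega
      rw [this] at hstep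
      omega
    have hmτ : m ≤ (τ j : ℕ) := by
      have := cnt_le_t (v := v) (le_of_lt hjτ) (τ j).isLt
      omega
    exact ⟨hjτ, hcntτ, hmτ, psi_unique hv (le_of_lt hjτ) (τ j).isLt hcntτ⟩
  have hστ : ∀ j ∈ WR m v, σ (τ j) = j := by
    intro j hj
    obtain ⟨hjτ, hcntτ, hmτ, hψτ⟩ := hτfacts j hj
    obtain ⟨_, hval, _⟩ := hσ (τ j) hmτ
    exact hv (by rw [hval, hψτ])
  have hσmem : ∀ k : Fin K, m ≤ (k : ℕ) → σ k ∈ WR m v := by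
    intro k hk
    obtain ⟨_, _, hc⟩ := hσ k hk
    rw [hWR]
    have : cnt v (σ k) (k : ℕ) ≤ cnt v (σ k) (K - 1) :=
      cnt_mono v (σ k) (by have := k.isLt; omega)
    omega
  have hτσ : ∀ k : Fin K, m ≤ (k : ℕ) → τ (σ k) = k := by
    intro k hk
    obtain ⟨hjk, hjψ, hjc⟩ := hσ k hk
    set j := σ k with hj
    have hjWR : j ∈ WR m v := hσmem k hk
    obtain ⟨hge, hmin⟩ := hτspec j hjWR
    have hτle : (τ j : ℕ) ≤ (k : ℕ) := by
      by_contra hcon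
      push_neg at hcon
      have := hmin (k : ℕ) hcon
      omega
    have hτeq : (τ j : ℕ) = (k : ℕ) := by
      by_contra hcon
      have hτlt : (τ j : ℕ) < (k : ℕ) := by omega
      have hk1 : 1 ≤ (k : ℕ) := by omega
      have hcle : cnt v j ((k : ℕ) - 1) = m := by
        have h1' := cnt_mono v j (show (τ j : ℕ) ≤ (k : ℕ) - 1 by omega)
        have h2' := cnt_mono v j (show (k : ℕ) - 1 ≤ (k : ℕ) by omega)
        omega
      have hjk' : j ≠ k := by
        intro h
        rw [h] at hjc
        have := hcntself k
        omega
      -- filters A ⊆ B with equal card m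
      have hAB : (Finset.univ.filter (fun i : Fin K => (i : ℕ) ≤ (k : ℕ) - 1 ∧ v j < v i))
          = (Finset.univ.filter (fun i : Fin K => (i : ℕ) ≤ (k : ℕ) ∧ v j < v i)) := by
        apply Finset.eq_of_subset_of_card_le
        · intro i hi
          simp only [Finset.mem_filter, Finset.mem_univ, true_and] at *
          exact ⟨by omega, hi.2⟩
        · have e1 : (Finset.univ.filter
              (fun i : Fin K => (i : ℕ) ≤ (k : ℕ) ∧ v j < v i)).card = m := hjc
          have e2 : (Finset.univ.filter
              (fun i : Fin K => (i : ℕ) ≤ (k : ℕ) - 1 ∧ v j < v i)).card = m := hcle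
          omega
      have hvk : v k < v j := by
        rcases lt_trichotomy (v k) (v j) with h | h | h
        · exact h
        · exact absurd (hv h) (Ne.symm hjk')
        · exfalso
          have hkmem : k ∈ Finset.univ.filter
              (fun i : Fin K => (i : ℕ) ≤ (k : ℕ) ∧ v j < v i) := by
            simp only [Finset.mem_filter, Finset.mem_univ, true_and]
            exact ⟨le_refl _, h⟩
          rw [← hAB] at hkmem
          simp only [Finset.mem_filter, Finset.mem_univ, true_and] at hkmem
          omega
      -- contradiction with hpre k
      have hsub : insert j (Finset.univ.filter
            (fun i : Fin K => (i : ℕ) ≤ (k : ℕ) - 1 ∧ v j < v i))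
          ⊆ Finset.univ.filter (fun i : Fin K => (i : ℕ) < (k : ℕ) ∧ v k < v i) := by
        intro i hi
        rcases Finset.mem_insert.mp hi with rfl | hi
        · simp only [Finset.mem_filter, Finset.mem_univ, true_and]
          refine ⟨lt_of_le_of_ne hjk fun h => hjk' (Fin.ext h), hvk⟩
        · simp only [Finset.mem_filter, Finset.mem_univ, true_and] at *
          exact ⟨by omega, hvk.trans hi.2⟩
      have hjnotin : j ∉ Finset.univ.filter
          (fun i : Fin K => (i : ℕ) ≤ (k : ℕ) - 1 ∧ v j < v i) := by
        simp only [Finset.mem_filter, Finset.mem_univ, true_and]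
        intro h
        exact absurd h.2 (lt_irrefl _)
      have hcard := Finset.card_le_card hsub
      rw [Finset.card_insert_of_notMem hjnotin] at hcard
      simp only [cnt] at hcle
      have := hpre k
      omega
    exact Fin.ext hτeq
  -- key sum identity
  have key : ∑ k ∈ Finset.univ.filter (fun k : Fin K => m ≤ (k : ℕ)), psi m v (k : ℕ)
      = ∑ j ∈ WR m v, v j := by
    apply Finset.sum_nbij' (i := σ) (j := τ)
    · intro a ha
      exact hσmem a (by simpa using (Finset.mem_filter.mp ha).2)
    · intro b hb
      simp only [Finset.mem_filter, Finset.mem_univ, true_and]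
      exact (hτfacts b hb).2.2.1
    · intro a ha
      exact hτσ a (by simpa using (Finset.mem_filter.mp ha).2)
    · intro b hb
      exact hστ b hb
    · intro a ha
      exact ((hσ a (by simpa using (Finset.mem_filter.mp ha).2)).2.1).symm
  -- final arithmetic
  have hsplit : ∑ k ∈ (WR m v)ᶜ, phat k + ∑ k ∈ WR m v, (phat k - v k)
      = (∑ k : Fin K, phat k) - ∑ k ∈ WR m v, v k := by
    rw [Finset.sum_sub_distrib, ← Finset.sum_compl_add_sum (WR m v) phat]
    ring
  rw [hsplit]
  have huniv : ∑ k : Fin K, phat k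
      = ∑ k ∈ Finset.univ.filter (fun k : Fin K => m ≤ (k : ℕ)), phat k
        + ∑ k ∈ Finset.univ.filter (fun k : Fin K => ¬ m ≤ (k : ℕ)), phat k :=
    (Finset.sum_filter_add_sum_filter_not _ _ _).symm
  have hge1 : 0 ≤ ∑ k ∈ Finset.univ.filter (fun k : Fin K => ¬ m ≤ (k : ℕ)), phat k :=
    Finset.sum_nonneg fun k hk => h1 k (by
      have := (Finset.mem_filter.mp hk).2; omega)
  have hge2 : ∑ k ∈ Finset.univ.filter (fun k : Fin K => m ≤ (k : ℕ)), psi m v (k : ℕ)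
      ≤ ∑ k ∈ Finset.univ.filter (fun k : Fin K => m ≤ (k : ℕ)), phat k :=
    Finset.sum_le_sum fun k hk => h2 k (Finset.mem_filter.mp hk).2
  linarith
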